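/- arXiv:2111.14814 — 3 statements merged into one kernel-verified Lean document; each statement's English description precedes it below -/
import Mathlib

section
/- Let r, κ > 0, m_∞ ≥ 0 with m_∞ < r, and let ρ : [0,∞) → ℝ be a C¹ function satisfying ε ρ'(t) = (r - κ ρ(t)) ρ(t) - M(t) for some ε > 0, where 0 ≤ M(t) ≤ m_∞ ρ(t) for all t. If (r - m_∞)/κ ≤ ρ(0) ≤ r/κ, then for all t ≥ 0, (r - m_∞)/κ ≤ ρ(t) ≤ r/κ. -/
open Set Filter

/-!
Both bounds are barriers of the equation. Above `r / κ` the logistic term is negative and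
`M ≥ 0`, so `ρ` decreases; strictly between `0` and `(r - m_inf) / κ` one has
`ε ρ' ≥ (r - m_inf - κ ρ) ρ > 0`, so `ρ` increases. Hence `ρ` can leave neither bound.
-/

/-- Each level `c' ∈ (c, d)` is a strict barrier by the fencing theorem, and `c` is their limit. -/
theorem le_of_hasDerivAt_neg_of_mem_Ioo {f f' : ℝ → ℝ} {a c d : ℝ} (hcd : c < d)
    (hf : ∀ x ≥ a, HasDerivAt f (f' x) x) (ha : f a ≤ c)
    (hneg : ∀ x ≥ a, f x ∈ Ioo c d → f' x < 0) :
    ∀ x ≥ a, f x ≤ c := by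
  intro x hx
  have below_level : ∀ c' ∈ Ioo c d, f x ≤ c' := fun c' hc' =>
    image_le_of_deriv_right_lt_deriv_boundary (B := fun _ => c') (B' := fun _ => 0)
      (fun y hy => (hf y hy.1).continuousAt.continuousWithinAt)
      (fun y hy => (hf y hy.1).hasDerivWithinAt) (ha.trans hc'.1.le)
      (fun _ => hasDerivAt_const _ _)
      (fun y hy hfy => hneg y hy.1 (hfy ▸ hc')) ⟨hx, le_rfl⟩
  exact ge_of_tendsto (tendsto_id.mono_left nhdsWithin_le_nhds)
    (eventually_of_mem (Ioo_mem_nhdsGT hcd) below_level)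

theorem stmt_0_general (r κ m_inf ε : ℝ) (hr : 0 < r) (hκ : 0 < κ)
    (hmr : m_inf < r) (hε : 0 < ε) (ρ M : ℝ → ℝ)
    (hρC1 : ContDiff ℝ 1 ρ)
    (hode : ∀ t ≥ (0:ℝ), ε * deriv ρ t = (r - κ * ρ t) * ρ t - M t)
    (hM : ∀ t ≥ (0:ℝ), 0 ≤ M t ∧ M t ≤ m_inf * ρ t)
    (h0 : (r - m_inf) / κ ≤ ρ 0 ∧ ρ 0 ≤ r / κ) :
    ∀ t ≥ (0:ℝ), (r - m_inf) / κ ≤ ρ t ∧ ρ t ≤ r / κ := by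
  have hρ : ∀ t, HasDerivAt ρ (deriv ρ t) t := fun t =>
    (hρC1.differentiable one_ne_zero t).hasDerivAt
  have lower : ∀ t ≥ (0:ℝ), -ρ t ≤ -((r - m_inf) / κ) := by
    refine le_of_hasDerivAt_neg_of_mem_Ioo (neg_lt_zero.mpr (div_pos (sub_pos.mpr hmr) hκ))
      (fun t _ => (hρ t).neg) (neg_le_neg h0.1) fun t ht hband => ?_
    have hpos : 0 < ρ t := neg_lt_zero.mp hband.2
    have hgap : 0 < r - m_inf - κ * ρ t := by
      have := (lt_div_iff₀ hκ).mp (neg_lt_neg_iff.mp hband.1); linarith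
    have : 0 < ε * deriv ρ t := by
      rw [hode t ht]; linarith [mul_pos hgap hpos, (hM t ht).2]
    exact neg_neg_of_pos (pos_of_mul_pos_right this hε.le)
  have upper : ∀ t ≥ (0:ℝ), ρ t ≤ r / κ := by
    refine le_of_hasDerivAt_neg_of_mem_Ioo (lt_add_one _) (fun t _ => hρ t) h0.2
      fun t ht hband => ?_
    have hpos : 0 < ρ t := (div_pos hr hκ).trans hband.1
    have hexcess : r - κ * ρ t < 0 := by
      have := (div_lt_iff₀ hκ).mp hband.1; linarith
    have : ε * deriv ρ t < 0 := by
      rw [hode t ht]; linarith [mul_neg_of_neg_of_pos hexcess hpos, (hM t ht).1]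
    exact neg_of_mul_neg_right this hε.le
  exact fun t ht => ⟨neg_le_neg_iff.mp (lower t ht), upper t ht⟩

/-- A priori bounds on the total population size ρ_ε. -/
theorem stmt_0 (r κ m_inf ε : ℝ) (hr : 0 < r) (hκ : 0 < κ) (hm0 : 0 ≤ m_inf)
    (hmr : m_inf < r) (hε : 0 < ε) (ρ M : ℝ → ℝ)
    (hρC1 : ContDiff ℝ 1 ρ)
    (hode : ∀ t ≥ (0:ℝ), ε * deriv ρ t = (r - κ * ρ t) * ρ t - M t)
    (hM : ∀ t ≥ (0:ℝ), 0 ≤ M t ∧ M t ≤ m_inf * ρ t)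
    (h0 : (r - m_inf) / κ ≤ ρ 0 ∧ ρ 0 ≤ r / κ) :
    ∀ t ≥ (0:ℝ), (r - m_inf) / κ ≤ ρ t ∧ ρ t ≤ r / κ :=
  stmt_0_general r κ m_inf ε hr hκ hmr hε ρ M hρC1 hode hM h0
end

section
/- Let ν : [0,∞) → ℝ be a C¹ positive function satisfying, for constants r > 0 and c ≥ 0 with 4c < r and ε > 0, the differential inequality ε ν'(t) ≥ (r/2 - 2c) ν(t) - (r/2) ν(t)². If ν(0) ≥ ν_m where 0 < ν_m ≤ 1 - 4c/r, then ν(t) ≥ ν_m for all t ≥ 0. -/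
open Real Set

/-- Lower bound half of the ν_ε estimate (logistic comparison). -/
theorem stmt_3 (r c ε ν_m : ℝ) (hr : 0 < r) (hc : 0 ≤ c) (hcr : 4 * c < r)
    (hε : 0 < ε) (hνm_pos : 0 < ν_m) (hνm : ν_m ≤ 1 - 4 * c / r)
    (ν : ℝ → ℝ) (hν : ContDiff ℝ 1 ν) (hpos : ∀ t, 0 < ν t)
    (hineq : ∀ t ≥ (0:ℝ), ε * deriv ν t ≥ (r / 2 - 2 * c) * ν t - (r / 2) * (ν t) ^ 2)
    (h0 : ν_m ≤ ν 0) :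
    ∀ t ≥ (0:ℝ), ν_m ≤ ν t := by
  have hcont : Continuous ν := hν.continuous
  have hkey : r * ν_m ≤ r - 4 * c := by
    have h1 : 4 * c / r * r = 4 * c := div_mul_cancel₀ _ hr.ne'
    nlinarith [mul_le_mul_of_nonneg_left hνm hr.le]
  intro t₀ ht₀
  by_contra hcon
  push_neg at hcon
  set S : Set ℝ := Icc (0:ℝ) t₀ ∩ {t | ν_m ≤ ν t} with hS
  have h0S : (0:ℝ) ∈ S := ⟨⟨le_refl 0, ht₀⟩, h0⟩
  have hbdd : BddAbove S := ⟨t₀, fun x hx => hx.1.2⟩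
  set s := sSup S with hs
  have hsmem : s ∈ S := by
    have hclosed : IsClosed S :=
      isClosed_Icc.inter (isClosed_le continuous_const hcont)
    exact hclosed.csSup_mem ⟨0, h0S⟩ hbdd
  have hs0 : 0 ≤ s := le_csSup hbdd h0S
  have hsν : ν_m ≤ ν s := hsmem.2
  have hst : s < t₀ := lt_of_le_of_ne hsmem.1.2 (fun h => by
    rw [h] at hsν; exact absurd hsν (not_le.mpr hcon))
  have hlt : ∀ x ∈ Ioo s t₀, ν x < ν_m := by
    intro x hx
    by_contra hge
    push_neg at hge
    have : x ∈ S := ⟨⟨le_trans hs0 hx.1.le, hx.2.le⟩, hge⟩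
    exact absurd (le_csSup hbdd this) (not_le.mpr hx.1)
  have hderiv : ∀ x ∈ interior (Icc s t₀), 0 < deriv ν x := by
    intro x hx
    rw [interior_Icc] at hx
    have hx0 : (0:ℝ) ≤ x := le_trans hs0 hx.1.le
    have h1 := hineq x hx0
    have h2 := hpos x
    have h3 := hlt x hx
    nlinarith [mul_pos h2 (show 0 < r - 4 * c - r * ν x by nlinarith)]
  have hmono : StrictMonoOn ν (Icc s t₀) :=
    strictMonoOn_of_deriv_pos (convex_Icc s t₀) hcont.continuousOn hderiv
  have := hmono (left_mem_Icc.mpr hst.le) (right_mem_Icc.mpr hst.le) hst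
  linarith
end

section
/- Let T > 0, and suppose u^X, u^Y : [0,T] × ℝ → ℝ are differentiable in time, continuous, nonpositive, with compact zero-level sets F_X(t), F_Y(t) that are nonempty. Let m : I × J → ℝ be continuous and strictly increasing in each variable. Suppose for all t ∈ [0,T]: (a) ∂_t u^X(t,y) = r - κρ(t) - ⟨φ^X(t,·,y), m(·,y)⟩ and ∂_t u^Y(t,x) = r - κρ(t) - ⟨φ^Y(t,x,·), m(x,·)⟩; (b) at any maximizer y* of u^X(t,·) (which has value 0) one has ∂_t u^X(t,y*) = 0, and similarly for u^Y; (c) φ^X(t,·,y) is a probability measure supported in F_Y(t) = {x : u^Y(t,x) = 0} whose support is independent of y, and φ^Y(t,x,·) is a probability measure supported in F_X(t) = {y : u^X(t,y) = 0} whose support is independent of x. Then F_X(t) and F_Y(t) are singletons for every t ∈ [0,T]. -/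
open Real Set MeasureTheory

/-- The topological support of a measure on ℝ. -/
def msupp (μ : Measure ℝ) : Set ℝ := {x | ∀ U ∈ nhds x, μ U ≠ 0}

lemma isClosed_msupp (μ : Measure ℝ) : IsClosed (msupp μ) := by
  rw [← isOpen_compl_iff, isOpen_iff_mem_nhds]
  intro x hx
  simp only [msupp, mem_compl_iff, mem_setOf_eq, not_forall] at hx
  obtain ⟨U, hU, hμU⟩ := hx
  rw [not_not] at hμU
  obtain ⟨V, hVU, hVopen, hxV⟩ := mem_nhds_iff.mp hU
  filter_upwards [hVopen.mem_nhds hxV] with z hz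
  simp only [msupp, mem_compl_iff, mem_setOf_eq, not_forall]
  exact ⟨V, hVopen.mem_nhds hz, not_not.mpr (measure_mono_null hVU hμU)⟩

lemma measure_compl_msupp (μ : Measure ℝ) : μ (msupp μ)ᶜ = 0 := by
  obtain ⟨T, hTc, hT𝒰, hTU⟩ :=
    TopologicalSpace.isOpen_sUnion_countable {U : Set ℝ | IsOpen U ∧ μ U = 0} (fun U hU => hU.1)
  have h1 : (msupp μ)ᶜ ⊆ ⋃₀ T := by
    rw [hTU]
    intro x hx
    simp only [msupp, mem_compl_iff, mem_setOf_eq, not_forall] at hx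
    obtain ⟨U, hU, hμU⟩ := hx
    rw [not_not] at hμU
    obtain ⟨V, hVU, hVopen, hxV⟩ := mem_nhds_iff.mp hU
    exact ⟨V, ⟨hVopen, measure_mono_null hVU hμU⟩, hxV⟩
  have h2 : μ (⋃₀ T) = 0 :=
    (measure_sUnion_null_iff hTc).2 fun s hs => (hT𝒰 hs).2
  exact measure_mono_null h1 h2

lemma ae_mem_msupp (μ : Measure ℝ) : ∀ᵐ x ∂μ, x ∈ msupp μ := by
  rw [MeasureTheory.ae_iff]
  exact measure_compl_msupp μ

lemma msupp_nonempty (μ : Measure ℝ) [IsProbabilityMeasure μ] : (msupp μ).Nonempty := by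
  by_contra h
  rw [Set.not_nonempty_iff_eq_empty] at h
  have h0 : μ Set.univ = 0 := by
    have := measure_compl_msupp μ
    rwa [h, Set.compl_empty] at this
  simp [measure_univ] at h0

section IntLemmas

noncomputable def cext (a b : ℝ) (hab : a ≤ b) (f : ℝ → ℝ) : ℝ → ℝ :=
  fun x => f (projIcc a b hab x)

lemma cext_cont {a b : ℝ} (hab : a ≤ b) {f : ℝ → ℝ} (hf : ContinuousOn f (Icc a b)) :
    Continuous (cext a b hab f) :=
  hf.comp_continuous (continuous_subtype_val.comp continuous_projIcc)
    (fun x => (projIcc a b hab x).2)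

lemma cext_eq_on {a b : ℝ} (hab : a ≤ b) (f : ℝ → ℝ) {x : ℝ} (hx : x ∈ Icc a b) :
    cext a b hab f x = f x := by
  simp [cext, projIcc_of_mem hab hx]

lemma cext_ae_eq {a b : ℝ} (hab : a ≤ b) {μ : Measure ℝ} (hsupp : msupp μ ⊆ Icc a b)
    (f : ℝ → ℝ) : cext a b hab f =ᵐ[μ] f := by
  filter_upwards [ae_mem_msupp μ] with x hx
  exact cext_eq_on hab f (hsupp hx)

lemma cext_integrable {a b : ℝ} (hab : a ≤ b) {μ : Measure ℝ} [IsProbabilityMeasure μ]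
    {f : ℝ → ℝ} (hf : ContinuousOn f (Icc a b)) : Integrable (cext a b hab f) μ := by
  obtain ⟨M, hM⟩ := (isCompact_Icc (a := a) (b := b)).exists_bound_of_continuousOn hf
  exact (integrable_const M).mono' (cext_cont hab hf).aestronglyMeasurable
    (Filter.Eventually.of_forall fun x => hM _ (projIcc a b hab x).2)

lemma f_integrable {a b : ℝ} (hab : a ≤ b) {μ : Measure ℝ} [IsProbabilityMeasure μ]
    (hsupp : msupp μ ⊆ Icc a b) {f : ℝ → ℝ} (hf : ContinuousOn f (Icc a b)) :
    Integrable f μ :=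
  (cext_integrable hab hf).congr (cext_ae_eq hab hsupp f)

lemma integral_le_of_le {a b : ℝ} (hab : a ≤ b) {μ : Measure ℝ} [IsProbabilityMeasure μ]
    (hsupp : msupp μ ⊆ Icc a b) {f : ℝ → ℝ} (hf : ContinuousOn f (Icc a b))
    {M : ℝ} (hM : ∀ x ∈ msupp μ, f x ≤ M) : ∫ x, f x ∂μ ≤ M := by
  have h := integral_mono_ae (f_integrable hab hsupp hf) (integrable_const M)
    (by filter_upwards [ae_mem_msupp μ] with x hx using hM x hx)
  simpa using h

lemma le_integral_of_le {a b : ℝ} (hab : a ≤ b) {μ : Measure ℝ} [IsProbabilityMeasure μ]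
    (hsupp : msupp μ ⊆ Icc a b) {f : ℝ → ℝ} (hf : ContinuousOn f (Icc a b))
    {M : ℝ} (hM : ∀ x ∈ msupp μ, M ≤ f x) : M ≤ ∫ x, f x ∂μ := by
  have h := integral_mono_ae (integrable_const M) (f_integrable hab hsupp hf)
    (by filter_upwards [ae_mem_msupp μ] with x hx using hM x hx)
  simpa using h

lemma eq_on_msupp_of_integral_eq {a b : ℝ} (hab : a ≤ b) {μ : Measure ℝ}
    [IsProbabilityMeasure μ] (hsupp : msupp μ ⊆ Icc a b) {f : ℝ → ℝ}
    (hf : ContinuousOn f (Icc a b)) {C : ℝ} (hle : ∀ x ∈ msupp μ, f x ≤ C)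
    (hint : ∫ x, f x ∂μ = C) {x₀ : ℝ} (hx₀ : x₀ ∈ msupp μ) : f x₀ = C := by
  set g := cext a b hab f with hg
  have hgc : Continuous g := cext_cont hab hf
  have hgae : g =ᵐ[μ] f := cext_ae_eq hab hsupp f
  have hint' : ∫ x, (C - g x) ∂μ = 0 := by
    have h1 : ∫ x, g x ∂μ = C := by rw [integral_congr_ae hgae, hint]
    have h2 : Integrable g μ := cext_integrable hab hf
    rw [integral_sub (integrable_const C) h2, h1]
    simp
  have hnn : 0 ≤ᵐ[μ] fun x => C - g x := by
    filter_upwards [ae_mem_msupp μ] with x hx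
    have hgx : g x = f x := cext_eq_on hab f (hsupp hx)
    simp only [Pi.zero_apply, hgx]
    linarith [hle x hx]
  have hzero : (fun x => C - g x) =ᵐ[μ] 0 :=
    (integral_eq_zero_iff_of_nonneg_ae hnn
      ((integrable_const C).sub (cext_integrable hab hf))).1 hint'
  have hnull : μ {x | g x ≠ C} = 0 := by
    have h := MeasureTheory.ae_iff.mp hzero
    refine measure_mono_null ?_ h
    intro x hx
    simp only [mem_setOf_eq, Pi.zero_apply] at hx ⊢
    intro h'
    exact hx (by linarith)
  have hgx₀ : g x₀ = f x₀ := cext_eq_on hab f (hsupp hx₀)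
  by_contra hne
  have hlt : g x₀ < C := lt_of_le_of_ne (hgx₀ ▸ hle x₀ hx₀) (hgx₀ ▸ hne)
  have hUopen : IsOpen {x | g x < C} := isOpen_lt hgc continuous_const
  have hpos := hx₀ {x | g x < C} (hUopen.mem_nhds hlt)
  exact hpos (measure_mono_null (fun x hx => ne_of_lt hx) hnull)

end IntLemmas

/-- Key abstract lemma: the zero set `FX` is a singleton. -/
lemma key_lemma (a b c d C : ℝ) (hab : a ≤ b) (hcd : c ≤ d) (m : ℝ → ℝ → ℝ)
    (hm_contx : ∀ y ∈ Icc c d, ContinuousOn (fun x => m x y) (Icc a b))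
    (hm_conty : ∀ x ∈ Icc a b, ContinuousOn (m x) (Icc c d))
    (hm_monox : ∀ y ∈ Icc c d, MonotoneOn (fun x => m x y) (Icc a b))
    (hm_monoy : ∀ x ∈ Icc a b, StrictMonoOn (m x) (Icc c d))
    (FX FY : Set ℝ) (hFXsub : FX ⊆ Icc c d) (hFYsub : FY ⊆ Icc a b)
    (hFXc : IsClosed FX) (hFXne : FX.Nonempty)
    (φX φY : ℝ → Measure ℝ)
    (hXprob : ∀ y ∈ Icc c d, IsProbabilityMeasure (φX y))
    (hYprob : ∀ x ∈ Icc a b, IsProbabilityMeasure (φY x))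
    (hXsupp : ∀ y ∈ Icc c d, msupp (φX y) ⊆ FY)
    (hYsupp : ∀ x ∈ Icc a b, msupp (φY x) ⊆ FX)
    (hXindep : ∀ y ∈ Icc c d, ∀ y' ∈ Icc c d, msupp (φX y) = msupp (φX y'))
    (hbX : ∀ y ∈ FX, ∫ x, m x y ∂(φX y) = C)
    (hbY : ∀ x ∈ FY, ∫ y, m x y ∂(φY x) = C) :
    ∃ y0, FX = {y0} := by
  have hFXbdd : BddBelow FX ∧ BddAbove FX :=
    ⟨(bddBelow_Icc).mono hFXsub, (bddAbove_Icc).mono hFXsub⟩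
  set yI := sInf FX with hyIdef
  set yS := sSup FX with hySdef
  have hyI : yI ∈ FX := hFXc.csInf_mem hFXne hFXbdd.1
  have hyS : yS ∈ FX := hFXc.csSup_mem hFXne hFXbdd.2
  have hyIcc : yI ∈ Icc c d := hFXsub hyI
  have hyScc : yS ∈ Icc c d := hFXsub hyS
  rcases eq_or_lt_of_le (csInf_le_csSup hFXne hFXbdd.1 hFXbdd.2) with heq | hlt
  · refine ⟨yI, Set.eq_singleton_iff_unique_mem.2 ⟨hyI, fun y hy => ?_⟩⟩
    have h1 : y ≤ yS := le_csSup hFXbdd.2 hy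
    have h2 : yI ≤ y := csInf_le hFXbdd.1 hy
    have h3 : y ≤ yI := by
      show y ≤ sInf FX
      rw [heq]; exact h1
    exact le_antisymm h3 h2
  -- Assume yI < yS and derive a contradiction.
  exfalso
  haveI : IsProbabilityMeasure (φX yI) := hXprob yI hyIcc
  haveI : IsProbabilityMeasure (φX yS) := hXprob yS hyScc
  set S := msupp (φX yI) with hSdef
  have hSne : S.Nonempty := msupp_nonempty _
  have hSc : IsClosed S := isClosed_msupp _
  have hSFY : S ⊆ FY := hXsupp yI hyIcc
  have hSsub : S ⊆ Icc a b := hSFY.trans hFYsub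
  have hSbddB : BddBelow S := (bddBelow_Icc).mono hSsub
  have hSbddA : BddAbove S := (bddAbove_Icc).mono hSsub
  set sI := sInf S with hsIdef
  set sS := sSup S with hsSdef
  have hsI : sI ∈ S := hSc.csInf_mem hSne hSbddB
  have hsS : sS ∈ S := hSc.csSup_mem hSne hSbddA
  have hsIab : sI ∈ Icc a b := hSsub hsI
  have hsSab : sS ∈ Icc a b := hSsub hsS
  have hsIFY : sI ∈ FY := hSFY hsI
  have hsSFY : sS ∈ FY := hSFY hsS
  have hSS : msupp (φX yS) = S := hXindep yS hyScc yI hyIcc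
  haveI : IsProbabilityMeasure (φY sI) := hYprob sI hsIab
  haveI : IsProbabilityMeasure (φY sS) := hYprob sS hsSab
  -- supports for φY
  set SI' := msupp (φY sI) with hSI'def
  set SS' := msupp (φY sS) with hSS'def
  have hSI'FX : SI' ⊆ FX := hYsupp sI hsIab
  have hSS'FX : SS' ⊆ FX := hYsupp sS hsSab
  have hSI'sub : SI' ⊆ Icc c d := hSI'FX.trans hFXsub
  have hSS'sub : SS' ⊆ Icc c d := hSS'FX.trans hFXsub
  -- (1) m sI yS ≤ C  (from hbX at yS, lower bound on support S)
  have h1 : m sI yS ≤ C := by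
    rw [← hbX yS hyS]
    refine le_integral_of_le hab (hSS ▸ hSsub) (hm_contx yS hyScc) ?_
    intro x hx
    rw [hSS] at hx
    exact hm_monox yS hyScc hsIab (hSsub hx) ((csInf_le hSbddB hx))
  -- (2) C ≤ sup over SI' of m sI ·  : C ≤ m sI tS where tS := sSup SI'? use bound by yS.
  have h2 : C ≤ m sI yS := by
    rw [← hbY sI hsIFY]
    refine integral_le_of_le hcd hSI'sub (hm_conty sI hsIab) ?_
    intro y hy
    have hyFX : y ∈ FX := hSI'FX hy
    exact (hm_monoy sI hsIab).monotoneOn (hFXsub hyFX) hyScc (le_csSup hFXbdd.2 hyFX)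
  have hEq1 : m sI yS = C := le_antisymm h1 h2
  -- (4) C ≤ m sS yI (from hbX at yI, upper bound on S)
  have h4 : C ≤ m sS yI := by
    rw [← hbX yI hyI]
    refine integral_le_of_le hab hSsub (hm_contx yI hyIcc) ?_
    intro x hx
    exact hm_monox yI hyIcc (hSsub hx) hsSab (le_csSup hSbddA hx)
  -- (5) m sS yI ≤ C (from hbY at sS, lower bound on SS')
  have h5 : m sS yI ≤ C := by
    rw [← hbY sS hsSFY]
    refine le_integral_of_le hcd hSS'sub (hm_conty sS hsSab) ?_
    intro y hy
    have hyFX : y ∈ FX := hSS'FX hy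
    exact (hm_monoy sS hsSab).monotoneOn hyIcc (hFXsub hyFX) (csInf_le hFXbdd.1 hyFX)
  have hEq2 : m sS yI = C := le_antisymm h5 h4
  -- (6) m sI yI = C via the equality-on-support lemma
  have h6 : m sI yI = C := by
    refine eq_on_msupp_of_integral_eq hab hSsub (hm_contx yI hyIcc) ?_ (hbX yI hyI) hsI
    intro x hx
    calc m x yI ≤ m sS yI := hm_monox yI hyIcc (hSsub hx) hsSab (le_csSup hSbddA hx)
    _ = C := hEq2
  -- (7) contradiction: m sI yI < m sI yS
  have h7 : m sI yI < m sI yS := hm_monoy sI hsIab hyIcc hyScc hlt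
  rw [h6, hEq1] at h7
  exact lt_irrefl _ h7


/-- Monotonic selection yields monomorphism: the zero sets of u^X(t,·) and u^Y(t,·)
are singletons for every t. -/
theorem stmt_15 (a b c d T r κ : ℝ) (hab : a < b) (hcd : c < d) (hT : 0 < T)
    (m : ℝ → ℝ → ℝ)
    (hm_cont : ContinuousOn (fun p : ℝ × ℝ => m p.1 p.2) (Icc a b ×ˢ Icc c d))
    (hm_monox : ∀ y ∈ Icc c d, StrictMonoOn (fun x => m x y) (Icc a b))
    (hm_monoy : ∀ x ∈ Icc a b, StrictMonoOn (m x) (Icc c d))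
    (uX uY : ℝ → ℝ → ℝ) (ρ : ℝ → ℝ)
    (FX : ℝ → Set ℝ) (hFX : ∀ t, FX t = {y ∈ Icc c d | uX t y = 0})
    (FY : ℝ → Set ℝ) (hFY : ∀ t, FY t = {x ∈ Icc a b | uY t x = 0})
    (huX_cont : ∀ t ∈ Icc (0:ℝ) T, ContinuousOn (uX t) (Icc c d))
    (huY_cont : ∀ t ∈ Icc (0:ℝ) T, ContinuousOn (uY t) (Icc a b))
    (huX_nonpos : ∀ t ∈ Icc (0:ℝ) T, ∀ y ∈ Icc c d, uX t y ≤ 0)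
    (huY_nonpos : ∀ t ∈ Icc (0:ℝ) T, ∀ x ∈ Icc a b, uY t x ≤ 0)
    (hFX_ne : ∀ t ∈ Icc (0:ℝ) T, (FX t).Nonempty)
    (hFY_ne : ∀ t ∈ Icc (0:ℝ) T, (FY t).Nonempty)
    (φX : ℝ → ℝ → Measure ℝ) (φY : ℝ → ℝ → Measure ℝ)
    -- (a) limit equations
    (haX : ∀ t ∈ Icc (0:ℝ) T, ∀ y ∈ Icc c d,
      HasDerivAt (fun s => uX s y) (r - κ * ρ t - ∫ x, m x y ∂(φX t y)) t)
    (haY : ∀ t ∈ Icc (0:ℝ) T, ∀ x ∈ Icc a b,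
      HasDerivAt (fun s => uY s x) (r - κ * ρ t - ∫ y, m x y ∂(φY t x)) t)
    -- (b) vanishing time-derivative at maximizers (zero-level points)
    (hbX : ∀ t ∈ Icc (0:ℝ) T, ∀ y ∈ FX t, r - κ * ρ t - ∫ x, m x y ∂(φX t y) = 0)
    (hbY : ∀ t ∈ Icc (0:ℝ) T, ∀ x ∈ FY t, r - κ * ρ t - ∫ y, m x y ∂(φY t x) = 0)
    -- (c) probability measures supported in the zero sets, support independent of y (resp. x)
    (hcX_prob : ∀ t ∈ Icc (0:ℝ) T, ∀ y ∈ Icc c d, IsProbabilityMeasure (φX t y))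
    (hcY_prob : ∀ t ∈ Icc (0:ℝ) T, ∀ x ∈ Icc a b, IsProbabilityMeasure (φY t x))
    (hcX_supp : ∀ t ∈ Icc (0:ℝ) T, ∀ y ∈ Icc c d, msupp (φX t y) ⊆ FY t)
    (hcY_supp : ∀ t ∈ Icc (0:ℝ) T, ∀ x ∈ Icc a b, msupp (φY t x) ⊆ FX t)
    (hcX_indep : ∀ t ∈ Icc (0:ℝ) T, ∀ y ∈ Icc c d, ∀ y' ∈ Icc c d,
      msupp (φX t y) = msupp (φX t y'))
    (hcY_indep : ∀ t ∈ Icc (0:ℝ) T, ∀ x ∈ Icc a b, ∀ x' ∈ Icc a b,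
      msupp (φY t x) = msupp (φY t x')) :
    ∀ t ∈ Icc (0:ℝ) T, (∃ y0, FX t = {y0}) ∧ (∃ x0, FY t = {x0}) := by
  intro t ht
  have hab' : a ≤ b := hab.le
  have hcd' : c ≤ d := hcd.le
  set C := r - κ * ρ t with hC
  -- continuity of m in each variable
  have hm_contx : ∀ y ∈ Icc c d, ContinuousOn (fun x => m x y) (Icc a b) := by
    intro y hy
    have : ContinuousOn ((fun p : ℝ × ℝ => m p.1 p.2) ∘ (fun x => (x, y))) (Icc a b) :=
      hm_cont.comp (Continuous.continuousOn (by fun_prop))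
        (fun x hx => Set.mk_mem_prod hx hy)
    exact this
  have hm_conty : ∀ x ∈ Icc a b, ContinuousOn (m x) (Icc c d) := by
    intro x hx
    have : ContinuousOn ((fun p : ℝ × ℝ => m p.1 p.2) ∘ (fun y => (x, y))) (Icc c d) :=
      hm_cont.comp (Continuous.continuousOn (by fun_prop))
        (fun y hy => Set.mk_mem_prod hx hy)
    exact this
  -- structure of FX t, FY t
  have hFXsub : FX t ⊆ Icc c d := by rw [hFX t]; exact fun y hy => hy.1
  have hFYsub : FY t ⊆ Icc a b := by rw [hFY t]; exact fun x hx => hx.1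
  have hFXc : IsClosed (FX t) := by
    rw [hFX t]
    have : {y ∈ Icc c d | uX t y = 0} = Icc c d ∩ (uX t) ⁻¹' {0} := by
      ext y; simp [Set.mem_inter_iff, Set.mem_preimage]
    rw [this]
    exact (huX_cont t ht).preimage_isClosed_of_isClosed isClosed_Icc isClosed_singleton
  have hFYc : IsClosed (FY t) := by
    rw [hFY t]
    have : {x ∈ Icc a b | uY t x = 0} = Icc a b ∩ (uY t) ⁻¹' {0} := by
      ext x; simp [Set.mem_inter_iff, Set.mem_preimage]
    rw [this]
    exact (huY_cont t ht).preimage_isClosed_of_isClosed isClosed_Icc isClosed_singleton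
  have hbX' : ∀ y ∈ FX t, ∫ x, m x y ∂(φX t y) = C := by
    intro y hy
    have := hbX t ht y hy
    linarith
  have hbY' : ∀ x ∈ FY t, ∫ y, m x y ∂(φY t x) = C := by
    intro x hx
    have := hbY t ht x hx
    linarith
  constructor
  · exact key_lemma a b c d C hab' hcd' m hm_contx hm_conty
      (fun y hy => (hm_monox y hy).monotoneOn) hm_monoy
      (FX t) (FY t) hFXsub hFYsub hFXc (hFX_ne t ht)
      (φX t) (φY t) (hcX_prob t ht) (hcY_prob t ht) (hcX_supp t ht) (hcY_supp t ht)
      (hcX_indep t ht) hbX' hbY'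
  · exact key_lemma c d a b C hcd' hab' (fun y x => m x y)
      (fun x hx => hm_conty x hx) (fun y hy => hm_contx y hy)
      (fun x hx => (hm_monoy x hx).monotoneOn)
      (fun y hy x hx x' hx' hlt => hm_monox y hy hx hx' hlt)
      (FY t) (FX t) hFYsub hFXsub hFYc (hFY_ne t ht)
      (φY t) (φX t) (hcY_prob t ht) (hcX_prob t ht) (hcY_supp t ht) (hcX_supp t ht)
      (hcY_indep t ht) hbY' hbX'
end
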